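/- Let λ₁, λ₂, λ₃ be nonzero real numbers with L := λ₁ + λ₂ + λ₃, satisfying λ_A² + λ_B² − λ_Aλ_B − L²/4 = 0 for all pairs A ≠ B from {1,2,3}. Then no such λ₁, λ₂, λ₃ exist. More generally, if nonzero reals λ₁,…,λ_n (n ≥ 3) with L = Σλ_A satisfy λ_A² + λ_B² − λ_Aλ_B = L²/4 for all A ≠ B, this leads to a contradiction; while for n = 2 the only solution is λ₁ = λ₂ = L/2. -/

import Mathlib

open Matrix

theorem stmt_15 :
    (∀ (n : ℕ), 3 ≤ n → ∀ lam : Fin n → ℝ,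
      (∀ A, lam A ≠ 0) →
      (∀ A B, A ≠ B →
        lam A ^ 2 + lam B ^ 2 - lam A * lam B - (∑ C, lam C) ^ 2 / 4 = 0) →
      False) ∧
    (∀ lam : Fin 2 → ℝ,
      (∀ A, lam A ≠ 0) →
      (∀ A B, A ≠ B →
        lam A ^ 2 + lam B ^ 2 - lam A * lam B - (∑ C, lam C) ^ 2 / 4 = 0) →
      lam 0 = (∑ C, lam C) / 2 ∧ lam 1 = (∑ C, lam C) / 2) := by
  constructor
  · intro n hn lam hne heq
    set L : ℝ := ∑ C, lam C with hL
    -- all eigenvalues are equal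
    have hall : ∀ A B : Fin n, lam A = lam B := by
      intro A B
      by_cases hAB : A = B
      · rw [hAB]
      -- find a third index
      have hC : ∃ C : Fin n, C ∉ ({A, B} : Finset (Fin n)) := by
        by_contra h
        push_neg at h
        have hsub : (Finset.univ : Finset (Fin n)) ⊆ {A, B} := fun c _ => h c
        have := Finset.card_le_card hsub
        have h2 : ({A, B} : Finset (Fin n)).card ≤ 2 :=
          (Finset.card_insert_le _ _).trans (by simp)
        simp [Finset.card_univ] at this
        omega
      obtain ⟨C, hC⟩ := hC
      simp only [Finset.mem_insert, Finset.mem_singleton, not_or] at hC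
      obtain ⟨hCA, hCB⟩ := hC
      have e1 := heq A B hAB
      have e2 := heq A C (Ne.symm hCA)
      have e3 := heq B C (Ne.symm hCB)
      have p1 : (lam A - lam B) * (lam A + lam B - lam C) = 0 := by nlinarith [e2, e3]
      have p2 : (lam B - lam C) * (lam B + lam C - lam A) = 0 := by nlinarith [e1, e2]
      rcases mul_eq_zero.mp p1 with h1 | h1
      · linarith
      · -- lam C = lam A + lam B
        rcases mul_eq_zero.mp p2 with h2 | h2
        · -- lam B = lam C = lam A + lam B ⇒ lam A = 0
          exact absurd (by linarith : lam A = 0) (hne A)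
        · -- lam B + lam C = lam A and lam C = lam A + lam B ⇒ lam B = 0
          exact absurd (by linarith : lam B = 0) (hne B)
    -- all equal to lam 0
    have h0 : (0 : ℕ) < n := by omega
    have h1 : (1 : ℕ) < n := by omega
    set x : ℝ := lam ⟨0, h0⟩ with hx
    have hsum : L = n * x := by
      rw [hL]
      rw [Finset.sum_congr rfl (fun i _ => hall i ⟨0, h0⟩)]
      simp [mul_comm, hx]
    have heq01 := heq ⟨0, h0⟩ ⟨1, h1⟩ (by simp)
    have h01 : lam ⟨1, h1⟩ = x := hall _ _
    rw [h01] at heq01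
    -- x^2 = (n x)^2 / 4
    have hx0 : x ≠ 0 := hne _
    have hkey : x ^ 2 * ((n : ℝ) ^ 2 - 4) = 0 := by
      rw [← hx, hsum] at heq01
      linear_combination (-4 : ℝ) * heq01
    have hn3 : (3 : ℝ) ≤ (n : ℝ) := by exact_mod_cast hn
    rcases mul_eq_zero.mp hkey with h | h
    · exact hx0 (pow_eq_zero_iff (by norm_num) |>.mp h)
    · nlinarith
  · intro lam hne heq
    have e := heq 0 1 (by decide)
    have hsum : (∑ C, lam C) = lam 0 + lam 1 := by
      simp [Fin.sum_univ_two]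
    rw [hsum] at e ⊢
    have h01 : lam 0 = lam 1 := by nlinarith [e, sq_nonneg (lam 0 - lam 1)]
    constructor <;> linarith
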